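/- Let a, ã ∈ [0.3, 0.4], b ∈ [0.3, 0.4], and c, d, d̃ ∈ [0, 0.1]. Then: (1) □(s_{a,b}) ∩ □(p^{AC}_{ã,c}) ≠ ∅ if and only if ã = a; (2) □(t_{c,d}) ∩ □(p^{AD}_{a,d̃}) ≠ ∅ if and only if d̃ = d; (3) □(p^{AC}_{a,c}) ∩ □(z₀) ≠ ∅; (4) □(s_{a,b}) ∩ □(t_{c,d}) = ∅ and □(s_{a,b}) ∩ □(z₀) = ∅. -/

import Mathlib

noncomputable section

/-- The closed axis-parallel hypercube of side length 1 centered at `p ∈ ℝ⁶`. -/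
def cube (p : Fin 6 → ℝ) : Set (Fin 6 → ℝ) :=
  {x | ∀ i, |x i - p i| ≤ 1 / 2}

/-- Center `s_{a,b} = (a, 1+a, b, 1+b, 0.5, 0.5)`. -/
def sC (a b : ℝ) : Fin 6 → ℝ := ![a, 1 + a, b, 1 + b, 0.5, 0.5]

/-- Center `t_{c,d} = (1+c, c, 1+c, c, 1+d, d)`. -/
def tC (c d : ℝ) : Fin 6 → ℝ := ![1 + c, c, 1 + c, c, 1 + d, d]

/-- Center `p^{AC}_{a,c} = (1+a, a, c, 1+c, 0.5, 0.5)`. -/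
def pAC (a c : ℝ) : Fin 6 → ℝ := ![1 + a, a, c, 1 + c, 0.5, 0.5]

/-- Center `p^{AD}_{a,d} = (1+a, a, 0.5, 0.5, d, 1+d)`. -/
def pAD (a d : ℝ) : Fin 6 → ℝ := ![1 + a, a, 0.5, 0.5, d, 1 + d]

/-- Center `z₀ = (0.8, 0.2, 0.8, 0.2, 0.8, 0.2)`. -/
def z₀ : Fin 6 → ℝ := ![0.8, 0.2, 0.8, 0.2, 0.8, 0.2]


@[simp] lemma cons_val_five {α : Type*} (a0 a1 a2 a3 a4 a5 : α) :
    ![a0, a1, a2, a3, a4, a5] (5 : Fin 6) = a5 := rfl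

lemma cube_inter_nonempty (p q : Fin 6 → ℝ) :
    (cube p ∩ cube q).Nonempty ↔ ∀ i, |p i - q i| ≤ 1 := by
  constructor
  · rintro ⟨x, hx, hy⟩ i
    have h1 := hx i
    have h2 := hy i
    have : |p i - q i| ≤ |x i - q i| + |x i - p i| := by
      have : p i - q i = (x i - q i) - (x i - p i) := by ring
      rw [this]
      exact abs_sub _ _
    linarith
  · intro h
    refine ⟨fun i => (p i + q i) / 2, fun i => ?_, fun i => ?_⟩ <;>
    · have := abs_le.1 (h i)
      rw [abs_le]
      constructor <;> simp only [] <;> linarith [this.1, this.2]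

lemma cube_inter_empty (p q : Fin 6 → ℝ) (i : Fin 6) (h : 1 < |p i - q i|) :
    cube p ∩ cube q = ∅ := by
  rw [Set.eq_empty_iff_forall_notMem]
  rintro x ⟨hx, hy⟩
  have h1 := hx i
  have h2 := hy i
  have : |p i - q i| ≤ |x i - q i| + |x i - p i| := by
    have e : p i - q i = (x i - q i) - (x i - p i) := by ring
    rw [e]; exact abs_sub _ _
  linarith

theorem stmt6 (a a' b c d d' : ℝ)
    (ha : a ∈ Set.Icc (0.3 : ℝ) 0.4) (ha' : a' ∈ Set.Icc (0.3 : ℝ) 0.4)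
    (hb : b ∈ Set.Icc (0.3 : ℝ) 0.4)
    (hc : c ∈ Set.Icc (0 : ℝ) 0.1) (hd : d ∈ Set.Icc (0 : ℝ) 0.1)
    (hd' : d' ∈ Set.Icc (0 : ℝ) 0.1) :
    ((cube (sC a b) ∩ cube (pAC a' c)).Nonempty ↔ a' = a) ∧
    ((cube (tC c d) ∩ cube (pAD a d')).Nonempty ↔ d' = d) ∧
    (cube (pAC a c) ∩ cube z₀).Nonempty ∧
    (cube (sC a b) ∩ cube (tC c d) = ∅ ∧ cube (sC a b) ∩ cube z₀ = ∅) := by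
  obtain ⟨ha1, ha2⟩ := ha
  obtain ⟨ha'1, ha'2⟩ := ha'
  obtain ⟨hb1, hb2⟩ := hb
  obtain ⟨hc1, hc2⟩ := hc
  obtain ⟨hd1, hd2⟩ := hd
  obtain ⟨hd'1, hd'2⟩ := hd'
  refine ⟨?_, ?_, ?_, ?_, ?_⟩
  · rw [cube_inter_nonempty]
    constructor
    · intro h
      have h0 := h 0
      have h1 := h 1
      simp [sC, pAC, cons_val_five] at h0 h1
      rw [abs_le] at h0 h1
      linarith [h0.1, h1.2]
    · rintro rfl i
      fin_cases i <;> simp [sC, pAC, cons_val_five] <;> rw [abs_le] <;> constructor <;> norm_num <;> linarith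
  · rw [cube_inter_nonempty]
    constructor
    · intro h
      have h4 := h 4
      have h5 := h 5
      simp [tC, pAD, cons_val_five] at h4 h5
      rw [abs_le] at h4 h5
      linarith [h4.2, h5.1]
    · rintro rfl i
      fin_cases i <;> simp [tC, pAD, cons_val_five] <;> rw [abs_le] <;> constructor <;> norm_num <;> linarith
  · rw [cube_inter_nonempty]
    intro i
    fin_cases i <;> simp [pAC, z₀, cons_val_five] <;> rw [abs_le] <;> constructor <;> norm_num <;> linarith
  · apply cube_inter_empty _ _ 1
    simp only [sC, tC, Matrix.cons_val_one, Matrix.head_cons, Matrix.cons_val_zero]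
    rw [lt_abs]
    left
    linarith
  · apply cube_inter_empty _ _ 1
    simp only [sC, z₀, Matrix.cons_val_one, Matrix.head_cons]
    rw [lt_abs]
    left
    norm_num
    linarith
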